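/- Let A be a unital C*-algebra and let S ⊆ T ⊆ A be selfadjoint subspaces of A with 1 ∈ S. Then for every selfadjoint x ∈ S, Metric.infDist x S₊ = Metric.infDist x T₊, where S₊ = {y ∈ S : 0 ≤ y in A} and T₊ = {y ∈ T : 0 ≤ y in A}. (This is the gauge maximality of unital inclusions of operator systems; applying it to Mₙ(S) ⊆ Mₙ(T) inside Mₙ(A) yields the statement at every matrix level.) -/
import Mathlib


open scoped ComplexOrder

/-- In a unital C*-algebra `A`, if `S ⊆ T` are closed selfadjoint subspaces
with `1 ∈ S`, then for every selfadjoint `x ∈ S` the distance of `x` to the positive cone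
of `S` equals the distance of `x` to the positive cone of `T` (gauge maximality of unital
inclusions of operator systems). -/
theorem stmt_4 {A : Type*} [CStarAlgebra A] [PartialOrder A] [StarOrderedRing A]
    (S T : Submodule ℂ A) (hST : S ≤ T)
    (hSclosed : IsClosed (S : Set A)) (hTclosed : IsClosed (T : Set A))
    (hSstar : ∀ x ∈ S, star x ∈ S) (hTstar : ∀ x ∈ T, star x ∈ T)
    (hone : (1 : A) ∈ S)
    (x : A) (hxS : x ∈ S) (hx : IsSelfAdjoint x) :
    Metric.infDist x {y : A | y ∈ S ∧ 0 ≤ y} = Metric.infDist x {y : A | y ∈ T ∧ 0 ≤ y} := by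
  rcases subsingleton_or_nontrivial A with hA | hA
  · have : ({y : A | y ∈ S ∧ 0 ≤ y} : Set A) = {y : A | y ∈ T ∧ 0 ≤ y} := by
      ext y
      simp [Subsingleton.elim y (0 : A), S.zero_mem, T.zero_mem]
    rw [this]
  · have hSne : ({y : A | y ∈ S ∧ 0 ≤ y} : Set A).Nonempty :=
      ⟨0, S.zero_mem, le_refl 0⟩
    have hTne : ({y : A | y ∈ T ∧ 0 ≤ y} : Set A).Nonempty :=
      ⟨0, T.zero_mem, le_refl 0⟩
    have hsub : ({y : A | y ∈ S ∧ 0 ≤ y} : Set A) ⊆ {y : A | y ∈ T ∧ 0 ≤ y} :=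
      fun y hy => ⟨hST hy.1, hy.2⟩
    refine le_antisymm ?_ (Metric.infDist_le_infDist_of_subset hsub hSne)
    refine le_of_forall_pos_le_add fun ε hε => ?_
    set d := Metric.infDist x {y : A | y ∈ T ∧ 0 ≤ y} with hd
    have hd0 : 0 ≤ d := Metric.infDist_nonneg
    have hlt : Metric.infDist x {y : A | y ∈ T ∧ 0 ≤ y} < d + ε := by linarith
    obtain ⟨y, hy, hdist⟩ := (Metric.infDist_lt_iff hTne).mp hlt
    obtain ⟨hyT, hy0⟩ := hy
    set t : ℝ := d + ε with ht
    have ht0 : 0 ≤ t := by positivity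
    have hz : IsSelfAdjoint (x - y) := hx.sub hy0.isSelfAdjoint
    have hnorm : ‖x - y‖ < t := by rwa [dist_eq_norm] at hdist
    -- x + t • 1 is nonneg
    have key : (0 : A) ≤ x + algebraMap ℝ A t := by
      have h1 : - (algebraMap ℝ A ‖x - y‖) ≤ x - y := hz.neg_algebraMap_norm_le_self
      have h2 : (0 : A) ≤ algebraMap ℝ A (t - ‖x - y‖) := by
        have hc : (0 : ℝ) ≤ t - ‖x - y‖ := by linarith
        have : algebraMap ℝ A (t - ‖x - y‖) =
            star (algebraMap ℝ A (Real.sqrt (t - ‖x - y‖))) *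
              algebraMap ℝ A (Real.sqrt (t - ‖x - y‖)) := by
          rw [← algebraMap_star_comm, star_trivial, ← map_mul, Real.mul_self_sqrt hc]
        rw [this]
        exact star_mul_self_nonneg _
      have h3 : (0 : A) ≤ (x - y) + algebraMap ℝ A ‖x - y‖ := by
        rwa [neg_le_iff_add_nonneg] at h1
      calc (0 : A) ≤ y + (((x - y) + algebraMap ℝ A ‖x - y‖)
              + algebraMap ℝ A (t - ‖x - y‖)) :=
            add_nonneg hy0 (add_nonneg h3 h2)
        _ = x + algebraMap ℝ A t := by
            rw [map_sub]; abel
    have hmem : x + algebraMap ℝ A t ∈ S := by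
      have : algebraMap ℝ A t = (t : ℂ) • (1 : A) := by
        rw [Algebra.algebraMap_eq_smul_one]
        norm_cast
      rw [this]
      exact S.add_mem hxS (S.smul_mem _ hone)
    have hle : Metric.infDist x {y : A | y ∈ S ∧ 0 ≤ y} ≤ dist x (x + algebraMap ℝ A t) :=
      Metric.infDist_le_dist_of_mem ⟨hmem, key⟩
    have : dist x (x + algebraMap ℝ A t) = t := by
      rw [dist_eq_norm]
      simp [abs_of_nonneg ht0]
    linarith
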